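/- Let f(x) = x^2 * (1 + ln(n/x)) with n ≥ 4. For all reals x, y with 1 ≤ x ≤ y and x + y ≤ n - 1 and y ≤ (n-1)/2, we have f(x) + f(y) ≤ f(1) + f(x + y - 1) whenever x + y - 1 < n/2. -/

import Mathlib

open Real

/-- The smooth extension `F t = t^2 * (1 + (log n - log t))`. -/
noncomputable def Fn (n : ℝ) : ℝ → ℝ := fun t => t ^ 2 * (1 + (Real.log n - Real.log t))

/-- Its derivative `φ t = t * (1 + 2 (log n - log t))`. -/
noncomputable def phin (n : ℝ) : ℝ → ℝ := fun t => t * (1 + 2 * (Real.log n - Real.log t))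

lemma hasDerivAt_phin (n t : ℝ) (ht : 0 < t) :
    HasDerivAt (phin n) (2 * (Real.log n - Real.log t) - 1) t := by
  have h1 : HasDerivAt Real.log t⁻¹ t := Real.hasDerivAt_log ht.ne'
  have h2 : HasDerivAt (fun s => 1 + 2 * (Real.log n - Real.log s)) (2 * (0 - t⁻¹)) t :=
    (((hasDerivAt_const t (Real.log n)).sub h1).const_mul 2).const_add 1
  have h3 : HasDerivAt (fun s => id s * (1 + 2 * (Real.log n - Real.log s))) _ t :=
    (hasDerivAt_id t).mul h2
  convert h3 using 1
  · rfl
  simp only [id]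
  linear_combination 2 * mul_inv_cancel₀ ht.ne'

lemma hasDerivAt_Fn (n t : ℝ) (ht : 0 < t) :
    HasDerivAt (Fn n) (phin n t) t := by
  have h1 : HasDerivAt Real.log t⁻¹ t := Real.hasDerivAt_log ht.ne'
  have h2 : HasDerivAt (fun s => 1 + (Real.log n - Real.log s)) (0 - t⁻¹) t :=
    ((hasDerivAt_const t (Real.log n)).sub h1).const_add 1
  have hp : HasDerivAt (fun s : ℝ => s ^ 2) (2 * t) t := by
    simpa using (hasDerivAt_pow 2 t)
  have h3 : HasDerivAt (fun s => s ^ 2 * (1 + (Real.log n - Real.log s))) _ t := hp.mul h2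
  convert h3 using 1
  · rfl
  unfold phin
  field_simp
  ring

/-- `φ` is monotone on `(0, n/2]`. -/
lemma phin_mono (n : ℝ) (hn : 0 < n) (a b : ℝ) (ha : 0 < a) (hab : a ≤ b) (hb : b ≤ n / 2) :
    phin n a ≤ phin n b := by
  have hmono : MonotoneOn (phin n) (Set.Icc a b) := by
    apply monotoneOn_of_deriv_nonneg (convex_Icc a b)
    · exact fun t ht => ((hasDerivAt_phin n t (lt_of_lt_of_le ha ht.1)).continuousAt).continuousWithinAt
    · intro t ht
      rw [interior_Icc] at ht
      exact ((hasDerivAt_phin n t (ha.trans ht.1)).differentiableAt).differentiableWithinAt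
    · intro t ht
      rw [interior_Icc] at ht
      have ht0 : 0 < t := ha.trans ht.1
      rw [(hasDerivAt_phin n t ht0).deriv]
      have htn : t < n / 2 := lt_of_lt_of_le ht.2 hb
      have h2 : (2 : ℝ) ≤ n / t := by
        rw [le_div_iff₀ ht0]
        linarith
      have hlog : Real.log 2 ≤ Real.log n - Real.log t := by
        rw [← Real.log_div (by positivity) ht0.ne']
        exact Real.log_le_log (by norm_num) h2
      have h2log : (0.6931471803 : ℝ) < Real.log 2 := by
        have := Real.log_two_gt_d9
        linarith
      linarith
  simpa using hmono (Set.left_mem_Icc.2 hab) (Set.right_mem_Icc.2 hab) hab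

theorem f_iterated_smoothing (n : ℝ) (hn : 4 ≤ n) (f : ℝ → ℝ)
    (hf : ∀ t : ℝ, f t = t ^ 2 * (1 + Real.log (n / t)))
    (x y : ℝ) (hx : 1 ≤ x) (hxy : x ≤ y) (hsum : x + y ≤ n - 1)
    (hy : y ≤ (n - 1) / 2) (hlt : x + y - 1 < n / 2) :
    f x + f y ≤ f 1 + f (x + y - 1) := by
  have hn0 : (0 : ℝ) < n := by linarith
  have hy1 : (1 : ℝ) ≤ y := hx.trans hxy
  set c : ℝ := x + y with hc
  -- f agrees with Fn on positive reals
  have hfF : ∀ t : ℝ, 0 < t → f t = Fn n t := by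
    intro t ht
    rw [hf t, Fn, Real.log_div hn0.ne' ht.ne']
  -- the combined function g
  set g : ℝ → ℝ := fun s => Fn n s + Fn n (c - s) with hg
  have hanti : AntitoneOn g (Set.Icc 1 x) := by
    apply antitoneOn_of_deriv_nonpos (convex_Icc 1 x)
    · intro s hs
      have hs0 : (0 : ℝ) < s := lt_of_lt_of_le one_pos hs.1
      have hcs : 0 < c - s := by
        have : s ≤ x := hs.2
        simp only [hc]; linarith
      exact (((hasDerivAt_Fn n s hs0).add
        (((hasDerivAt_Fn n (c - s) hcs).comp s ((hasDerivAt_const s c).sub (hasDerivAt_id s))))).continuousAt).continuousWithinAt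
    · intro s hs
      rw [interior_Icc] at hs
      have hs0 : (0 : ℝ) < s := lt_trans one_pos hs.1
      have hcs : 0 < c - s := by simp only [hc]; nlinarith [hs.2]
      exact (((hasDerivAt_Fn n s hs0).add
        (((hasDerivAt_Fn n (c - s) hcs).comp s ((hasDerivAt_const s c).sub (hasDerivAt_id s))))).differentiableAt).differentiableWithinAt
    · intro s hs
      rw [interior_Icc] at hs
      have hs0 : (0 : ℝ) < s := lt_trans one_pos hs.1
      have hsx : s < x := hs.2
      have hs1 : 1 < s := hs.1
      have hcs : 0 < c - s := by simp only [hc]; linarith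
      have hder : HasDerivAt g (phin n s + phin n (c - s) * (0 - 1)) s :=
        (hasDerivAt_Fn n s hs0).add
          ((hasDerivAt_Fn n (c - s) hcs).comp s ((hasDerivAt_const s c).sub (hasDerivAt_id s)))
      rw [hder.deriv]
      have hle : phin n s ≤ phin n (c - s) := by
        apply phin_mono n hn0 s (c - s) hs0
        · simp only [hc]; linarith
        · simp only [hc]; linarith
      linarith
  have key : g x ≤ g 1 :=
    hanti (Set.left_mem_Icc.2 hx) (Set.right_mem_Icc.2 hx) hx
  have hx0 : (0 : ℝ) < x := lt_of_lt_of_le one_pos hx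
  have hy0 : (0 : ℝ) < y := lt_of_lt_of_le one_pos hy1
  have hc1 : (0 : ℝ) < c - 1 := by simp only [hc]; linarith
  rw [hfF x hx0, hfF y hy0, hfF 1 one_pos, hfF (x + y - 1) (by linarith)]
  have h1 : g x = Fn n x + Fn n y := by simp [hg, hc]
  have h2 : g 1 = Fn n 1 + Fn n (x + y - 1) := by
    simp only [hg, hc]
  rw [h1, h2] at key
  exact key
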